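/- Let G be a finite simple chordal graph that is P_7-free, and let IR be an irredundant set of G. Then D_RN(G) is an independence system: for every nonempty A ∈ D_RN(G) and every a ∈ A, the set A \ {a} belongs to D_RN(G). -/

import Mathlib

variable {V : Type*}

/-- The closed neighborhood `N[x]` of a vertex. -/
def cnbr (G : SimpleGraph V) (x : V) : Set V := insert x (G.neighborSet x)

/-- `N[X] = ⋃ x ∈ X, N[x]`. -/
def cnbrSet (G : SimpleGraph V) (X : Set V) : Set V := ⋃ x ∈ X, cnbr G x

/-- `N(X) = N[X] \ X`. -/
def onbrSet (G : SimpleGraph V) (X : Set V) : Set V := cnbrSet G X \ X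

/-- `D` dominates `X` if `X ⊆ N[D]`. -/
def Dominates (G : SimpleGraph V) (D X : Set V) : Prop := X ⊆ cnbrSet G D

/-- `D` is a minimal dominating set of `G`. -/
def IsMinDomSet (G : SimpleGraph V) (D : Set V) : Prop :=
  Dominates G D Set.univ ∧ ∀ D' : Set V, D' ⊂ D → ¬ Dominates G D' Set.univ

/-- `Priv(D, x)`: private neighbors of `x` w.r.t. `D`. -/
def priv (G : SimpleGraph V) (D : Set V) (x : V) : Set V := {u | cnbr G u ∩ D = {x}}

/-- `IR` is an irredundant set of `G`. -/
def IsIrredundantSet (G : SimpleGraph V) (IR : Set V) : Prop :=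
  (∀ v : V, ∃ x ∈ IR, cnbr G x ⊆ cnbr G v) ∧
  (∀ x ∈ IR, ∀ v : V, ¬ cnbr G v ⊂ cnbr G x) ∧
  (∀ x ∈ IR, ∀ y ∈ IR, x ≠ y → cnbr G x ≠ cnbr G y)

/-- `Priv_IR(D, x) = Priv(D, x) ∩ IR`. -/
def privIR (G : SimpleGraph V) (IR D : Set V) (x : V) : Set V := priv G D x ∩ IR

/-- `A ∈ D_RN(G)`: `A` is the intersection of a minimal dominating set with `RN = V \ IR`. -/
def memDRN (G : SimpleGraph V) (IR A : Set V) : Prop :=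
  ∃ D : Set V, IsMinDomSet G D ∧ A = D ∩ IRᶜ

/-- `G` is `P_k`-free: it has no induced path on `k` vertices. -/
def PkFree (G : SimpleGraph V) (k : ℕ) : Prop :=
  ¬ ∃ f : Fin k → V, Function.Injective f ∧
      ∀ i j : Fin k, G.Adj (f i) (f j) ↔ (i.val + 1 = j.val ∨ j.val + 1 = i.val)

/-- `G` is chordal: no induced cycle on `n ≥ 4` vertices. -/
def Chordal (G : SimpleGraph V) : Prop :=
  ∀ n : ℕ, 4 ≤ n → ¬ ∃ f : ZMod n → V, Function.Injective f ∧
      ∀ i j : ZMod n, G.Adj (f i) (f j) ↔ (i = j + 1 ∨ j = i + 1)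

/-- `C` is a connected component of the subgraph of `G` induced by `S`. -/
def IsCompOf (G : SimpleGraph V) (S C : Set V) : Prop :=
  C ⊆ S ∧ C.Nonempty ∧ (G.induce C).Connected ∧
    ∀ x ∈ C, ∀ y ∈ S, G.Adj x y → y ∈ C

/-- `B(A)`: the elements of `A` having an irredundant private neighbor in some irredundant
component entirely contained in `N(A)`. -/
def Bset (G : SimpleGraph V) (IR A : Set V) : Set V :=
  {a ∈ A | ∃ C : Set V, IsCompOf G IR C ∧ C ⊆ onbrSet G A ∧ (privIR G IR A a ∩ C).Nonempty}

/-- Domination inside the subgraph induced by `C`: every `u ∈ X` equals, or is adjacent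
(within `C`) to, some `d ∈ D`.  For `D, X ⊆ C` this is domination in `G[C]`. -/
def domIn (G : SimpleGraph V) (C D X : Set V) : Prop :=
  ∀ u ∈ X, ∃ d ∈ D, u = d ∨ (G.Adj d u ∧ d ∈ C ∧ u ∈ C)


section Util

variable {G : SimpleGraph V}

lemma mem_cnbr {x v : V} : v ∈ cnbr G x ↔ v = x ∨ G.Adj x v := by
  simp [cnbr, SimpleGraph.mem_neighborSet]

lemma self_mem_cnbr (x : V) : x ∈ cnbr G x := by simp [mem_cnbr]

lemma cnbr_comm {x v : V} : v ∈ cnbr G x ↔ x ∈ cnbr G v := by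
  rw [mem_cnbr, mem_cnbr, G.adj_comm, eq_comm]

lemma adj_of_mem_cnbr {x v : V} (h : v ∈ cnbr G x) (hne : v ≠ x) : G.Adj x v :=
  (mem_cnbr.1 h).resolve_left hne

lemma mem_cnbr_of_adj {x v : V} (h : G.Adj x v) : v ∈ cnbr G x := mem_cnbr.2 (Or.inr h)

lemma mem_cnbrSet {D : Set V} {v : V} : v ∈ cnbrSet G D ↔ ∃ d ∈ D, v ∈ cnbr G d := by
  simp [cnbrSet]

lemma dominates_mono {D D' X : Set V} (h : D ⊆ D') (hD : Dominates G D X) :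
    Dominates G D' X := by
  intro v hv
  obtain ⟨d, hd, hvd⟩ := mem_cnbrSet.1 (hD hv)
  exact mem_cnbrSet.2 ⟨d, h hd, hvd⟩

lemma dominated_vertex {D : Set V} (hD : Dominates G D Set.univ) (x : V) :
    ∃ d ∈ D, d ∈ cnbr G x := by
  obtain ⟨d, hd, hvd⟩ := mem_cnbrSet.1 (hD (Set.mem_univ x))
  exact ⟨d, hd, cnbr_comm.1 hvd⟩

end Util


section Cycles

lemma chordal_c4 {G : SimpleGraph V} (hch : Chordal G) {v0 v1 v2 v3 : V}
    (a01 : G.Adj v0 v1) (a12 : G.Adj v1 v2) (a23 : G.Adj v2 v3) (a30 : G.Adj v3 v0)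
    (n02 : ¬ G.Adj v0 v2) (n13 : ¬ G.Adj v1 v3)
    (e02 : v0 ≠ v2) (e13 : v1 ≠ v3) : False := by
  have hcases : ∀ i : ZMod 4, i = 0 ∨ i = 1 ∨ i = 2 ∨ i = 3 := by decide
  refine hch 4 (by norm_num) ⟨![v0,v1,v2,v3], ?_, ?_⟩
  · intro i j hij
    rcases hcases i with rfl|rfl|rfl|rfl <;> rcases hcases j with rfl|rfl|rfl|rfl
    · rfl
    · exact absurd hij a01.ne
    · exact absurd hij e02
    · exact absurd hij a30.ne'
    · exact absurd hij a01.ne'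
    · rfl
    · exact absurd hij a12.ne
    · exact absurd hij e13
    · exact absurd hij e02.symm
    · exact absurd hij a12.ne'
    · rfl
    · exact absurd hij a23.ne
    · exact absurd hij a30.ne
    · exact absurd hij e13.symm
    · exact absurd hij a23.ne'
    · rfl
  · intro i j
    rcases hcases i with rfl|rfl|rfl|rfl <;> rcases hcases j with rfl|rfl|rfl|rfl
    · exact iff_of_false (G.loopless.irrefl _) (by decide)
    · exact iff_of_true a01 (by decide)
    · exact iff_of_false n02 (by decide)
    · exact iff_of_true a30.symm (by decide)
    · exact iff_of_true a01.symm (by decide)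
    · exact iff_of_false (G.loopless.irrefl _) (by decide)
    · exact iff_of_true a12 (by decide)
    · exact iff_of_false n13 (by decide)
    · exact iff_of_false (fun h => n02 h.symm) (by decide)
    · exact iff_of_true a12.symm (by decide)
    · exact iff_of_false (G.loopless.irrefl _) (by decide)
    · exact iff_of_true a23 (by decide)
    · exact iff_of_true a30 (by decide)
    · exact iff_of_false (fun h => n13 h.symm) (by decide)
    · exact iff_of_true a23.symm (by decide)
    · exact iff_of_false (G.loopless.irrefl _) (by decide)


lemma chordal_c5 {G : SimpleGraph V} (hch : Chordal G) {v0 v1 v2 v3 v4 : V}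
    (a01 : G.Adj v0 v1) (a12 : G.Adj v1 v2) (a23 : G.Adj v2 v3) (a34 : G.Adj v3 v4) (a40 : G.Adj v4 v0) (n02 : ¬ G.Adj v0 v2) (n03 : ¬ G.Adj v0 v3) (n13 : ¬ G.Adj v1 v3) (n14 : ¬ G.Adj v1 v4) (n24 : ¬ G.Adj v2 v4) (e02 : v0 ≠ v2) (e03 : v0 ≠ v3) (e13 : v1 ≠ v3) (e14 : v1 ≠ v4) (e24 : v2 ≠ v4) : False := by
  have hcases : ∀ i : ZMod 5, i = 0 ∨ i = 1 ∨ i = 2 ∨ i = 3 ∨ i = 4 := by decide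
  refine hch 5 (by norm_num) ⟨![v0,v1,v2,v3,v4], ?_, ?_⟩
  · intro i j hij
    rcases hcases i with rfl|rfl|rfl|rfl|rfl <;> rcases hcases j with rfl|rfl|rfl|rfl|rfl
    · rfl
    · exact absurd hij (a01.ne)
    · exact absurd hij (e02)
    · exact absurd hij (e03)
    · exact absurd hij (a40.ne')
    · exact absurd hij (a01.ne')
    · rfl
    · exact absurd hij (a12.ne)
    · exact absurd hij (e13)
    · exact absurd hij (e14)
    · exact absurd hij (e02.symm)
    · exact absurd hij (a12.ne')
    · rfl
    · exact absurd hij (a23.ne)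
    · exact absurd hij (e24)
    · exact absurd hij (e03.symm)
    · exact absurd hij (e13.symm)
    · exact absurd hij (a23.ne')
    · rfl
    · exact absurd hij (a34.ne)
    · exact absurd hij (a40.ne)
    · exact absurd hij (e14.symm)
    · exact absurd hij (e24.symm)
    · exact absurd hij (a34.ne')
    · rfl
  · intro i j
    rcases hcases i with rfl|rfl|rfl|rfl|rfl <;> rcases hcases j with rfl|rfl|rfl|rfl|rfl
    · exact iff_of_false (G.loopless.irrefl _) (by decide)
    · exact iff_of_true a01 (by decide)
    · exact iff_of_false n02 (by decide)
    · exact iff_of_false n03 (by decide)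
    · exact iff_of_true a40.symm (by decide)
    · exact iff_of_true a01.symm (by decide)
    · exact iff_of_false (G.loopless.irrefl _) (by decide)
    · exact iff_of_true a12 (by decide)
    · exact iff_of_false n13 (by decide)
    · exact iff_of_false n14 (by decide)
    · exact iff_of_false (fun h => n02 h.symm) (by decide)
    · exact iff_of_true a12.symm (by decide)
    · exact iff_of_false (G.loopless.irrefl _) (by decide)
    · exact iff_of_true a23 (by decide)
    · exact iff_of_false n24 (by decide)
    · exact iff_of_false (fun h => n03 h.symm) (by decide)
    · exact iff_of_false (fun h => n13 h.symm) (by decide)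
    · exact iff_of_true a23.symm (by decide)
    · exact iff_of_false (G.loopless.irrefl _) (by decide)
    · exact iff_of_true a34 (by decide)
    · exact iff_of_true a40 (by decide)
    · exact iff_of_false (fun h => n14 h.symm) (by decide)
    · exact iff_of_false (fun h => n24 h.symm) (by decide)
    · exact iff_of_true a34.symm (by decide)
    · exact iff_of_false (G.loopless.irrefl _) (by decide)

lemma chordal_c6 {G : SimpleGraph V} (hch : Chordal G) {v0 v1 v2 v3 v4 v5 : V}
    (a01 : G.Adj v0 v1) (a12 : G.Adj v1 v2) (a23 : G.Adj v2 v3) (a34 : G.Adj v3 v4) (a45 : G.Adj v4 v5) (a50 : G.Adj v5 v0) (n02 : ¬ G.Adj v0 v2) (n03 : ¬ G.Adj v0 v3) (n04 : ¬ G.Adj v0 v4) (n13 : ¬ G.Adj v1 v3) (n14 : ¬ G.Adj v1 v4) (n15 : ¬ G.Adj v1 v5) (n24 : ¬ G.Adj v2 v4) (n25 : ¬ G.Adj v2 v5) (n35 : ¬ G.Adj v3 v5) (e02 : v0 ≠ v2) (e03 : v0 ≠ v3) (e04 : v0 ≠ v4) (e13 : v1 ≠ v3) (e14 : v1 ≠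 v4) (e15 : v1 ≠ v5) (e24 : v2 ≠ v4) (e25 : v2 ≠ v5) (e35 : v3 ≠ v5) : False := by
  have hcases : ∀ i : ZMod 6, i = 0 ∨ i = 1 ∨ i = 2 ∨ i = 3 ∨ i = 4 ∨ i = 5 := by decide
  refine hch 6 (by norm_num) ⟨![v0,v1,v2,v3,v4,v5], ?_, ?_⟩
  · intro i j hij
    rcases hcases i with rfl|rfl|rfl|rfl|rfl|rfl <;> rcases hcases j with rfl|rfl|rfl|rfl|rfl|rfl
    · rfl
    · exact absurd hij (a01.ne)
    · exact absurd hij (e02)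
    · exact absurd hij (e03)
    · exact absurd hij (e04)
    · exact absurd hij (a50.ne')
    · exact absurd hij (a01.ne')
    · rfl
    · exact absurd hij (a12.ne)
    · exact absurd hij (e13)
    · exact absurd hij (e14)
    · exact absurd hij (e15)
    · exact absurd hij (e02.symm)
    · exact absurd hij (a12.ne')
    · rfl
    · exact absurd hij (a23.ne)
    · exact absurd hij (e24)
    · exact absurd hij (e25)
    · exact absurd hij (e03.symm)
    · exact absurd hij (e13.symm)
    · exact absurd hij (a23.ne')
    · rfl
    · exact absurd hij (a34.ne)
    · exact absurd hij (e35)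
    · exact absurd hij (e04.symm)
    · exact absurd hij (e14.symm)
    · exact absurd hij (e24.symm)
    · exact absurd hij (a34.ne')
    · rfl
    · exact absurd hij (a45.ne)
    · exact absurd hij (a50.ne)
    · exact absurd hij (e15.symm)
    · exact absurd hij (e25.symm)
    · exact absurd hij (e35.symm)
    · exact absurd hij (a45.ne')
    · rfl
  · intro i j
    rcases hcases i with rfl|rfl|rfl|rfl|rfl|rfl <;> rcases hcases j with rfl|rfl|rfl|rfl|rfl|rfl
    · exact iff_of_false (G.loopless.irrefl _) (by decide)
    · exact iff_of_true a01 (by decide)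
    · exact iff_of_false n02 (by decide)
    · exact iff_of_false n03 (by decide)
    · exact iff_of_false n04 (by decide)
    · exact iff_of_true a50.symm (by decide)
    · exact iff_of_true a01.symm (by decide)
    · exact iff_of_false (G.loopless.irrefl _) (by decide)
    · exact iff_of_true a12 (by decide)
    · exact iff_of_false n13 (by decide)
    · exact iff_of_false n14 (by decide)
    · exact iff_of_false n15 (by decide)
    · exact iff_of_false (fun h => n02 h.symm) (by decide)
    · exact iff_of_true a12.symm (by decide)
    · exact iff_of_false (G.loopless.irrefl _) (by decide)
    · exact iff_of_true a23 (by decide)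
    · exact iff_of_false n24 (by decide)
    · exact iff_of_false n25 (by decide)
    · exact iff_of_false (fun h => n03 h.symm) (by decide)
    · exact iff_of_false (fun h => n13 h.symm) (by decide)
    · exact iff_of_true a23.symm (by decide)
    · exact iff_of_false (G.loopless.irrefl _) (by decide)
    · exact iff_of_true a34 (by decide)
    · exact iff_of_false n35 (by decide)
    · exact iff_of_false (fun h => n04 h.symm) (by decide)
    · exact iff_of_false (fun h => n14 h.symm) (by decide)
    · exact iff_of_false (fun h => n24 h.symm) (by decide)
    · exact iff_of_true a34.symm (by decide)
    · exact iff_of_false (G.loopless.irrefl _) (by decide)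
    · exact iff_of_true a45 (by decide)
    · exact iff_of_true a50 (by decide)
    · exact iff_of_false (fun h => n15 h.symm) (by decide)
    · exact iff_of_false (fun h => n25 h.symm) (by decide)
    · exact iff_of_false (fun h => n35 h.symm) (by decide)
    · exact iff_of_true a45.symm (by decide)
    · exact iff_of_false (G.loopless.irrefl _) (by decide)

lemma chordal_c7 {G : SimpleGraph V} (hch : Chordal G) {v0 v1 v2 v3 v4 v5 v6 : V}
    (a01 : G.Adj v0 v1) (a12 : G.Adj v1 v2) (a23 : G.Adj v2 v3) (a34 : G.Adj v3 v4) (a45 : G.Adj v4 v5) (a56 : G.Adj v5 v6) (a60 : G.Adj v6 v0) (n02 : ¬ G.Adj v0 v2) (n03 : ¬ G.Adj v0 v3) (n04 : ¬ G.Adj v0 v4) (n05 : ¬ G.Adj v0 v5) (n13 : ¬ G.Adj v1 v3) (n14 : ¬ G.Adj v1 v4) (n15 : ¬ G.Adj v1 v5) (n16 : ¬ G.Adj v1 v6) (n24 : ¬ G.Adj v2 v4) (n25 : ¬ G.Adj v2 v5) (n26 : ¬ G.Adj v2 v6) (n35 : ¬ G.Adj v3 v5) (n36 : ¬ G.Adj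 v3 v6) (n46 : ¬ G.Adj v4 v6) (e02 : v0 ≠ v2) (e03 : v0 ≠ v3) (e04 : v0 ≠ v4) (e05 : v0 ≠ v5) (e13 : v1 ≠ v3) (e14 : v1 ≠ v4) (e15 : v1 ≠ v5) (e16 : v1 ≠ v6) (e24 : v2 ≠ v4) (e25 : v2 ≠ v5) (e26 : v2 ≠ v6) (e35 : v3 ≠ v5) (e36 : v3 ≠ v6) (e46 : v4 ≠ v6) : False := by
  have hcases : ∀ i : ZMod 7, i = 0 ∨ i = 1 ∨ i = 2 ∨ i = 3 ∨ i = 4 ∨ i = 5 ∨ i = 6 := by decide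
  refine hch 7 (by norm_num) ⟨![v0,v1,v2,v3,v4,v5,v6], ?_, ?_⟩
  · intro i j hij
    rcases hcases i with rfl|rfl|rfl|rfl|rfl|rfl|rfl <;> rcases hcases j with rfl|rfl|rfl|rfl|rfl|rfl|rfl
    · rfl
    · exact absurd hij (a01.ne)
    · exact absurd hij (e02)
    · exact absurd hij (e03)
    · exact absurd hij (e04)
    · exact absurd hij (e05)
    · exact absurd hij (a60.ne')
    · exact absurd hij (a01.ne')
    · rfl
    · exact absurd hij (a12.ne)
    · exact absurd hij (e13)
    · exact absurd hij (e14)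
    · exact absurd hij (e15)
    · exact absurd hij (e16)
    · exact absurd hij (e02.symm)
    · exact absurd hij (a12.ne')
    · rfl
    · exact absurd hij (a23.ne)
    · exact absurd hij (e24)
    · exact absurd hij (e25)
    · exact absurd hij (e26)
    · exact absurd hij (e03.symm)
    · exact absurd hij (e13.symm)
    · exact absurd hij (a23.ne')
    · rfl
    · exact absurd hij (a34.ne)
    · exact absurd hij (e35)
    · exact absurd hij (e36)
    · exact absurd hij (e04.symm)
    · exact absurd hij (e14.symm)
    · exact absurd hij (e24.symm)
    · exact absurd hij (a34.ne')
    · rfl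
    · exact absurd hij (a45.ne)
    · exact absurd hij (e46)
    · exact absurd hij (e05.symm)
    · exact absurd hij (e15.symm)
    · exact absurd hij (e25.symm)
    · exact absurd hij (e35.symm)
    · exact absurd hij (a45.ne')
    · rfl
    · exact absurd hij (a56.ne)
    · exact absurd hij (a60.ne)
    · exact absurd hij (e16.symm)
    · exact absurd hij (e26.symm)
    · exact absurd hij (e36.symm)
    · exact absurd hij (e46.symm)
    · exact absurd hij (a56.ne')
    · rfl
  · intro i j
    rcases hcases i with rfl|rfl|rfl|rfl|rfl|rfl|rfl <;> rcases hcases j with rfl|rfl|rfl|rfl|rfl|rfl|rfl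
    · exact iff_of_false (G.loopless.irrefl _) (by decide)
    · exact iff_of_true a01 (by decide)
    · exact iff_of_false n02 (by decide)
    · exact iff_of_false n03 (by decide)
    · exact iff_of_false n04 (by decide)
    · exact iff_of_false n05 (by decide)
    · exact iff_of_true a60.symm (by decide)
    · exact iff_of_true a01.symm (by decide)
    · exact iff_of_false (G.loopless.irrefl _) (by decide)
    · exact iff_of_true a12 (by decide)
    · exact iff_of_false n13 (by decide)
    · exact iff_of_false n14 (by decide)
    · exact iff_of_false n15 (by decide)
    · exact iff_of_false n16 (by decide)
    · exact iff_of_false (fun h => n02 h.symm) (by decide)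
    · exact iff_of_true a12.symm (by decide)
    · exact iff_of_false (G.loopless.irrefl _) (by decide)
    · exact iff_of_true a23 (by decide)
    · exact iff_of_false n24 (by decide)
    · exact iff_of_false n25 (by decide)
    · exact iff_of_false n26 (by decide)
    · exact iff_of_false (fun h => n03 h.symm) (by decide)
    · exact iff_of_false (fun h => n13 h.symm) (by decide)
    · exact iff_of_true a23.symm (by decide)
    · exact iff_of_false (G.loopless.irrefl _) (by decide)
    · exact iff_of_true a34 (by decide)
    · exact iff_of_false n35 (by decide)
    · exact iff_of_false n36 (by decide)
    · exact iff_of_false (fun h => n04 h.symm) (by decide)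
    · exact iff_of_false (fun h => n14 h.symm) (by decide)
    · exact iff_of_false (fun h => n24 h.symm) (by decide)
    · exact iff_of_true a34.symm (by decide)
    · exact iff_of_false (G.loopless.irrefl _) (by decide)
    · exact iff_of_true a45 (by decide)
    · exact iff_of_false n46 (by decide)
    · exact iff_of_false (fun h => n05 h.symm) (by decide)
    · exact iff_of_false (fun h => n15 h.symm) (by decide)
    · exact iff_of_false (fun h => n25 h.symm) (by decide)
    · exact iff_of_false (fun h => n35 h.symm) (by decide)
    · exact iff_of_true a45.symm (by decide)
    · exact iff_of_false (G.loopless.irrefl _) (by decide)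
    · exact iff_of_true a56 (by decide)
    · exact iff_of_true a60 (by decide)
    · exact iff_of_false (fun h => n16 h.symm) (by decide)
    · exact iff_of_false (fun h => n26 h.symm) (by decide)
    · exact iff_of_false (fun h => n36 h.symm) (by decide)
    · exact iff_of_false (fun h => n46 h.symm) (by decide)
    · exact iff_of_true a56.symm (by decide)
    · exact iff_of_false (G.loopless.irrefl _) (by decide)

lemma p7free_contra {G : SimpleGraph V} (hP7 : PkFree G 7) {v0 v1 v2 v3 v4 v5 v6 : V}
    (a01 : G.Adj v0 v1) (a12 : G.Adj v1 v2) (a23 : G.Adj v2 v3) (a34 : G.Adj v3 v4) (a45 : G.Adj v4 v5) (a56 : G.Adj v5 v6) (n02 : ¬ G.Adj v0 v2) (n03 : ¬ G.Adj v0 v3) (n04 : ¬ G.Adj v0 v4) (n05 : ¬ G.Adj v0 v5) (n06 : ¬ G.Adj v0 v6) (n13 : ¬ G.Adj v1 v3) (n14 : ¬ G.Adj v1 v4) (n15 : ¬ G.Adj v1 v5) (n16 : ¬ G.Adj v1 v6) (n24 : ¬ G.Adj v2 v4) (n25 : ¬ G.Adj v2 v5) (n26 : ¬ G.Adj v2 v6)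 (n35 : ¬ G.Adj v3 v5) (n36 : ¬ G.Adj v3 v6) (n46 : ¬ G.Adj v4 v6) (e02 : v0 ≠ v2) (e03 : v0 ≠ v3) (e04 : v0 ≠ v4) (e05 : v0 ≠ v5) (e06 : v0 ≠ v6) (e13 : v1 ≠ v3) (e14 : v1 ≠ v4) (e15 : v1 ≠ v5) (e16 : v1 ≠ v6) (e24 : v2 ≠ v4) (e25 : v2 ≠ v5) (e26 : v2 ≠ v6) (e35 : v3 ≠ v5) (e36 : v3 ≠ v6) (e46 : v4 ≠ v6) : False := by
  have hcases : ∀ i : Fin 7, i = 0 ∨ i = 1 ∨ i = 2 ∨ i = 3 ∨ i = 4 ∨ i = 5 ∨ i = 6 := by decide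
  refine hP7 ⟨![v0,v1,v2,v3,v4,v5,v6], ?_, ?_⟩
  · intro i j hij
    rcases hcases i with rfl|rfl|rfl|rfl|rfl|rfl|rfl <;> rcases hcases j with rfl|rfl|rfl|rfl|rfl|rfl|rfl
    · rfl
    · exact absurd hij (a01.ne)
    · exact absurd hij (e02)
    · exact absurd hij (e03)
    · exact absurd hij (e04)
    · exact absurd hij (e05)
    · exact absurd hij (e06)
    · exact absurd hij (a01.ne')
    · rfl
    · exact absurd hij (a12.ne)
    · exact absurd hij (e13)
    · exact absurd hij (e14)
    · exact absurd hij (e15)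
    · exact absurd hij (e16)
    · exact absurd hij (e02.symm)
    · exact absurd hij (a12.ne')
    · rfl
    · exact absurd hij (a23.ne)
    · exact absurd hij (e24)
    · exact absurd hij (e25)
    · exact absurd hij (e26)
    · exact absurd hij (e03.symm)
    · exact absurd hij (e13.symm)
    · exact absurd hij (a23.ne')
    · rfl
    · exact absurd hij (a34.ne)
    · exact absurd hij (e35)
    · exact absurd hij (e36)
    · exact absurd hij (e04.symm)
    · exact absurd hij (e14.symm)
    · exact absurd hij (e24.symm)
    · exact absurd hij (a34.ne')
    · rfl
    · exact absurd hij (a45.ne)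
    · exact absurd hij (e46)
    · exact absurd hij (e05.symm)
    · exact absurd hij (e15.symm)
    · exact absurd hij (e25.symm)
    · exact absurd hij (e35.symm)
    · exact absurd hij (a45.ne')
    · rfl
    · exact absurd hij (a56.ne)
    · exact absurd hij (e06.symm)
    · exact absurd hij (e16.symm)
    · exact absurd hij (e26.symm)
    · exact absurd hij (e36.symm)
    · exact absurd hij (e46.symm)
    · exact absurd hij (a56.ne')
    · rfl
  · intro i j
    rcases hcases i with rfl|rfl|rfl|rfl|rfl|rfl|rfl <;> rcases hcases j with rfl|rfl|rfl|rfl|rfl|rfl|rfl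
    · exact iff_of_false (G.loopless.irrefl _) (by decide)
    · exact iff_of_true a01 (by decide)
    · exact iff_of_false n02 (by decide)
    · exact iff_of_false n03 (by decide)
    · exact iff_of_false n04 (by decide)
    · exact iff_of_false n05 (by decide)
    · exact iff_of_false n06 (by decide)
    · exact iff_of_true a01.symm (by decide)
    · exact iff_of_false (G.loopless.irrefl _) (by decide)
    · exact iff_of_true a12 (by decide)
    · exact iff_of_false n13 (by decide)
    · exact iff_of_false n14 (by decide)
    · exact iff_of_false n15 (by decide)
    · exact iff_of_false n16 (by decide)
    · exact iff_of_false (fun h => n02 h.symm) (by decide)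
    · exact iff_of_true a12.symm (by decide)
    · exact iff_of_false (G.loopless.irrefl _) (by decide)
    · exact iff_of_true a23 (by decide)
    · exact iff_of_false n24 (by decide)
    · exact iff_of_false n25 (by decide)
    · exact iff_of_false n26 (by decide)
    · exact iff_of_false (fun h => n03 h.symm) (by decide)
    · exact iff_of_false (fun h => n13 h.symm) (by decide)
    · exact iff_of_true a23.symm (by decide)
    · exact iff_of_false (G.loopless.irrefl _) (by decide)
    · exact iff_of_true a34 (by decide)
    · exact iff_of_false n35 (by decide)
    · exact iff_of_false n36 (by decide)
    · exact iff_of_false (fun h => n04 h.symm) (by decide)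
    · exact iff_of_false (fun h => n14 h.symm) (by decide)
    · exact iff_of_false (fun h => n24 h.symm) (by decide)
    · exact iff_of_true a34.symm (by decide)
    · exact iff_of_false (G.loopless.irrefl _) (by decide)
    · exact iff_of_true a45 (by decide)
    · exact iff_of_false n46 (by decide)
    · exact iff_of_false (fun h => n05 h.symm) (by decide)
    · exact iff_of_false (fun h => n15 h.symm) (by decide)
    · exact iff_of_false (fun h => n25 h.symm) (by decide)
    · exact iff_of_false (fun h => n35 h.symm) (by decide)
    · exact iff_of_true a45.symm (by decide)
    · exact iff_of_false (G.loopless.irrefl _) (by decide)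
    · exact iff_of_true a56 (by decide)
    · exact iff_of_false (fun h => n06 h.symm) (by decide)
    · exact iff_of_false (fun h => n16 h.symm) (by decide)
    · exact iff_of_false (fun h => n26 h.symm) (by decide)
    · exact iff_of_false (fun h => n36 h.symm) (by decide)
    · exact iff_of_false (fun h => n46 h.symm) (by decide)
    · exact iff_of_true a56.symm (by decide)
    · exact iff_of_false (G.loopless.irrefl _) (by decide)


end Cycles


section Core

variable {G : SimpleGraph V}

lemma priv_eq {x d w : V} {D : Set V} (h : cnbr G x ∩ D = {d})
    (hw1 : w ∈ cnbr G x) (hw2 : w ∈ D) : w = d := by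
  have : w ∈ cnbr G x ∩ D := ⟨hw1, hw2⟩
  rw [h] at this; exact this

lemma priv_mem {x d : V} {D : Set V} (h : cnbr G x ∩ D = {d}) : d ∈ cnbr G x ∧ d ∈ D :=
  (Set.eq_singleton_iff_unique_mem.1 h).1

lemma priv_exists {D : Set V} (hD : IsMinDomSet G D) {d : V} (hd : d ∈ D) :
    ∃ u, cnbr G u ∩ D = {d} := by
  by_contra h
  push_neg at h
  apply hD.2 (D \ {d}) (Set.sdiff_singleton_ssubset.2 hd)
  intro v _
  obtain ⟨e, he, hev⟩ := dominated_vertex hD.1 v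
  have : ∃ e' ∈ cnbr G v ∩ D, e' ≠ d := by
    by_contra h2
    push_neg at h2
    apply h v
    exact Set.eq_singleton_iff_unique_mem.2 ⟨(h2 e ⟨hev, he⟩) ▸ ⟨hev, he⟩, fun w hw => h2 w hw⟩
  obtain ⟨e', ⟨he'v, he'D⟩, he'd⟩ := this
  exact mem_cnbrSet.2 ⟨e', ⟨he'D, he'd⟩, cnbr_comm.1 he'v⟩

lemma privIR_exists {IR : Set V} (hIR : IsIrredundantSet G IR) {D : Set V}
    (hD : IsMinDomSet G D) {d : V} (hd : d ∈ D) : ∃ t ∈ IR, cnbr G t ∩ D = {d} := by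
  obtain ⟨u, hu⟩ := priv_exists hD hd
  obtain ⟨x, hxIR, hxsub⟩ := hIR.1 u
  refine ⟨x, hxIR, ?_⟩
  have hsub : cnbr G x ∩ D ⊆ {d} := by
    rw [← hu]; exact Set.inter_subset_inter_left _ hxsub
  obtain ⟨e, heD, hex⟩ := dominated_vertex hD.1 x
  have hed : e = d := hsub ⟨hex, heD⟩
  exact hsub.antisymm (Set.singleton_subset_iff.2 ⟨hed ▸ hex, hed ▸ heD⟩)

/-- Key lemma (uses chordality and `P₇`-freeness): for a minimal dominating set `D` and
distinct `a b ∈ D \ IR`, some irredundant private neighbor of `b` sees no irredundant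
private neighbor of `a`. -/
lemma key_c2 (hch : Chordal G) (hP7 : PkFree G 7) {IR : Set V}
    (hIR : IsIrredundantSet G IR) {D : Set V} (hD : IsMinDomSet G D)
    {a b : V} (haD : a ∈ D) (hbD : b ∈ D) (haIR : a ∉ IR) (hbIR : b ∉ IR) (hab : a ≠ b) :
    ∃ t ∈ IR, cnbr G t ∩ D = {b} ∧ ∀ s ∈ IR, cnbr G s ∩ D = {a} → s ∉ cnbr G t := by
  by_contra hc2
  push_neg at hc2
  obtain ⟨t0, ht0IR, ht0b⟩ := privIR_exists hIR hD hbD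
  obtain ⟨s0, hs0IR, hs0a, hst⟩ := hc2 t0 ht0IR ht0b
  -- basic facts
  have haS : a ∈ cnbr G s0 := (priv_mem hs0a).1
  have hbT : b ∈ cnbr G t0 := (priv_mem ht0b).1
  have haT : a ∉ cnbr G t0 := fun h => hab (priv_eq ht0b h haD)
  have hbS : b ∉ cnbr G s0 := fun h => hab (priv_eq hs0a h hbD).symm
  have hs0D : s0 ∉ D := fun h => haIR ((priv_eq hs0a (self_mem_cnbr s0) h) ▸ hs0IR)
  have ht0D : t0 ∉ D := fun h => hbIR ((priv_eq ht0b (self_mem_cnbr t0) h) ▸ ht0IR)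
  have neas : a ≠ s0 := fun h => hs0D (h ▸ haD)
  have nebt : b ≠ t0 := fun h => ht0D (h ▸ hbD)
  have nest : s0 ≠ t0 := by
    intro h; subst h; exact hab ((priv_eq hs0a (priv_mem ht0b).1 hbD).symm)
  have Aas : G.Adj a s0 := (adj_of_mem_cnbr haS neas).symm
  have Ast : G.Adj s0 t0 := (adj_of_mem_cnbr hst nest).symm
  have Atb : G.Adj t0 b := adj_of_mem_cnbr hbT nebt
  have nAat : ¬ G.Adj a t0 := fun h => haT (mem_cnbr_of_adj h.symm)
  have nAsb : ¬ G.Adj s0 b := fun h => hbS (mem_cnbr_of_adj h)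
  have neat : a ≠ t0 := fun h => haT (h ▸ self_mem_cnbr a)
  have nesb : s0 ≠ b := fun h => hbS (h ▸ self_mem_cnbr s0)
  have nab : ¬ G.Adj a b := fun h =>
    chordal_c4 hch Aas Ast Atb h.symm nAat nAsb neat nesb
  -- the vertex y
  have hNa : ¬ (cnbr G a ⊆ cnbr G s0) := by
    intro hsub
    have heq : cnbr G a = cnbr G s0 := by
      by_contra hne
      exact hIR.2.1 s0 hs0IR a (hsub.ssubset_of_ne hne)
    have : t0 ∈ cnbr G a := heq ▸ (mem_cnbr_of_adj Ast)
    exact haT (cnbr_comm.1 this)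
  obtain ⟨y, hya, hys⟩ := Set.not_subset.1 hNa
  have neya : y ≠ a := fun h => hys (h ▸ haS)
  have Aay : G.Adj a y := adj_of_mem_cnbr hya neya
  have nAys : ¬ G.Adj y s0 := fun h => hys (mem_cnbr_of_adj h.symm)
  have neys : y ≠ s0 := fun h => hys (h ▸ self_mem_cnbr y)
  have neyt : y ≠ t0 := fun h => nAat (h ▸ Aay)
  have neyb : y ≠ b := fun h => nab (h ▸ Aay)
  have nAyt : ¬ G.Adj y t0 := fun h =>
    chordal_c4 hch Aay.symm Aas Ast h.symm nAys nAat neys neat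
  have nAyb : ¬ G.Adj y b := fun h =>
    chordal_c5 hch Aay.symm Aas Ast Atb h.symm nAys nAyt nAat nab nAsb neys neyt neat hab nesb
  -- z-side
  by_cases hz : ∀ z ∈ cnbr G b \ cnbr G t0, cnbr G z ⊆ cnbr G b
  · by_cases hd2 : ∃ d ∈ D ∩ cnbr G b, d ≠ b
    · obtain ⟨d, ⟨hdD, hdb⟩, hdneb⟩ := hd2
      have hdnt : d ∉ cnbr G t0 := fun h => hdneb (priv_eq ht0b h hdD)
      have hsubd : cnbr G d ⊆ cnbr G b := hz d ⟨hdb, hdnt⟩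
      obtain ⟨x, hxIR, hxd⟩ := privIR_exists hIR hD hdD
      have hdx : d ∈ cnbr G x := (priv_mem hxd).1
      have hxb : x ∈ cnbr G b := hsubd (cnbr_comm.1 hdx)
      have hbx : b ∈ cnbr G x := cnbr_comm.1 hxb
      exact hdneb (priv_eq hxd hbx hbD).symm
    · push_neg at hd2
      have hbonly : cnbr G b ∩ D ⊆ {b} := fun w ⟨hwb, hwD⟩ => hd2 w ⟨hwD, hwb⟩
      have hNb : ¬ (cnbr G b ⊆ cnbr G t0) := by
        intro hsub
        have heq : cnbr G b = cnbr G t0 := by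
          by_contra hne
          exact hIR.2.1 t0 ht0IR b (hsub.ssubset_of_ne hne)
        have : s0 ∈ cnbr G b := heq ▸ hst
        exact hbS (cnbr_comm.1 this)
      obtain ⟨z, hzb, hznt⟩ := Set.not_subset.1 hNb
      have hsubz : cnbr G z ⊆ cnbr G b := hz z ⟨hzb, hznt⟩
      obtain ⟨zh, hzhIR, hzhsub⟩ := hIR.1 z
      have h1 : cnbr G zh ∩ D ⊆ {b} :=
        (Set.inter_subset_inter_left _ (hzhsub.trans hsubz)).trans hbonly
      obtain ⟨e, heD, hez⟩ := dominated_vertex hD.1 zh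
      have heb : e = b := h1 ⟨hez, heD⟩
      have hzhb : cnbr G zh ∩ D = {b} :=
        h1.antisymm (Set.singleton_subset_iff.2 ⟨heb ▸ hez, heb ▸ heD⟩)
      obtain ⟨s', hs'IR, hs'a, hs'z⟩ := hc2 zh hzhIR hzhb
      have : s' ∈ cnbr G b := (hzhsub.trans hsubz) hs'z
      exact hab ((priv_eq hs'a (cnbr_comm.1 this) hbD).symm)
  · push_neg at hz
    obtain ⟨zs, ⟨hzsb, hzsnt⟩, hzs⟩ := hz
    obtain ⟨z', hz'zs, hz'b⟩ := Set.not_subset.1 hzs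
    have nezsb : zs ≠ b := fun h => hzsnt (h ▸ hbT)
    have Abz : G.Adj b zs := adj_of_mem_cnbr hzsb nezsb
    have nAtzs : ¬ G.Adj t0 zs := fun h => hzsnt (mem_cnbr_of_adj h)
    have nezst : zs ≠ t0 := fun h => hzsnt (h ▸ self_mem_cnbr zs)
    have nAszs : ¬ G.Adj s0 zs := fun h =>
      chordal_c4 hch Ast Atb Abz h.symm nAsb nAtzs nesb nezst.symm
    have neszs : s0 ≠ zs := fun h => nAsb (by rw [h]; exact Abz.symm)
    have netzs : t0 ≠ zs := nezst.symm
    have neazs : a ≠ zs := fun h => nab (by rw [h]; exact Abz.symm)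
    have nAazs : ¬ G.Adj a zs := fun h =>
      chordal_c5 hch Aas Ast Atb Abz h.symm nAat nab nAsb nAszs nAtzs
        neat hab nesb neszs netzs
    have neyzs : y ≠ zs := fun h => nAyb (by rw [h]; exact Abz.symm)
    have nAyzs : ¬ G.Adj y zs := fun h =>
      chordal_c6 hch Aay.symm Aas Ast Atb Abz h.symm nAys nAyt nAyb nAat nab nAazs
        nAsb nAszs nAtzs neys neyt neyb neat hab neazs nesb neszs netzs
    -- the vertex z'
    have nez'zs : z' ≠ zs := fun h => hz'b (by rw [h]; exact hzsb)
    have Azsz : G.Adj zs z' := adj_of_mem_cnbr hz'zs nez'zs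
    have nAbz' : ¬ G.Adj b z' := fun h => hz'b (mem_cnbr_of_adj h)
    have nebz' : b ≠ z' := fun h => hz'b (by rw [← h]; exact self_mem_cnbr b)
    have nAtz' : ¬ G.Adj t0 z' := fun h =>
      chordal_c4 hch Atb Abz Azsz h.symm nAtzs nAbz' netzs nebz'
    have netz' : t0 ≠ z' := fun h => nAtzs (by rw [h]; exact Azsz.symm)
    have nAsz' : ¬ G.Adj s0 z' := fun h =>
      chordal_c5 hch Ast Atb Abz Azsz h.symm nAsb nAszs nAtzs nAtz' nAbz'
        nesb neszs netzs netz' nebz'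
    have nesz' : s0 ≠ z' := fun h => nAszs (by rw [h]; exact Azsz.symm)
    have nAaz' : ¬ G.Adj a z' := fun h =>
      chordal_c6 hch Aas Ast Atb Abz Azsz h.symm nAat nab nAazs nAsb nAszs nAsz'
        nAtzs nAtz' nAbz' neat hab neazs nesb neszs nesz' netzs netz' nebz'
    have neaz' : a ≠ z' := fun h => nAazs (by rw [h]; exact Azsz.symm)
    have nAyz' : ¬ G.Adj y z' := fun h =>
      chordal_c7 hch Aay.symm Aas Ast Atb Abz Azsz h.symm
        nAys nAyt nAyb nAyzs nAat nab nAazs nAaz' nAsb nAszs nAsz' nAtzs nAtz' nAbz'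
        neys neyt neyb neyzs neat hab neazs neaz' nesb neszs nesz' netzs netz' nebz'
    have neyz' : y ≠ z' := fun h => nAyzs (by rw [h]; exact Azsz.symm)
    exact p7free_contra hP7 Aay.symm Aas Ast Atb Abz Azsz
      nAys nAyt nAyb nAyzs nAyz' nAat nab nAazs nAaz' nAsb nAszs nAsz' nAtzs nAtz' nAbz'
      neys neyt neyb neyzs neyz' neat hab neazs neaz' nesb neszs nesz' netzs netz' nebz'

end Core


section Final

variable {G : SimpleGraph V}

lemma exists_minimal_dom [Fintype V] (B : Set V) (S : Set V)
    (hS : Dominates G (B ∪ S) Set.univ) :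
    ∃ S' ⊆ S, Dominates G (B ∪ S') Set.univ ∧
      ∀ S'' ⊂ S', ¬ Dominates G (B ∪ S'') Set.univ := by
  classical
  have H : ∀ n : ℕ, ∀ S : Set V, S.ncard ≤ n → Dominates G (B ∪ S) Set.univ →
      ∃ S' ⊆ S, Dominates G (B ∪ S') Set.univ ∧
        ∀ S'' ⊂ S', ¬ Dominates G (B ∪ S'') Set.univ := by
    intro n
    induction n with
    | zero =>
      intro S hcard hdom
      have hemp : S = ∅ := (Set.ncard_eq_zero (Set.toFinite S)).1 (Nat.le_zero.1 hcard)
      subst hemp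
      exact ⟨∅, subset_rfl, hdom, fun S'' hss _ => absurd (le_bot_iff.1 hss.le) hss.ne⟩
    | succ n ih =>
      intro S hcard hdom
      by_cases h : ∃ S'' ⊂ S, Dominates G (B ∪ S'') Set.univ
      · obtain ⟨S'', hss, hdom''⟩ := h
        have hlt : S''.ncard < S.ncard := Set.ncard_lt_ncard hss (Set.toFinite S)
        obtain ⟨S', h1, h2, h3⟩ := ih S'' (by omega) hdom''
        exact ⟨S', h1.trans hss.subset, h2, h3⟩
      · push_neg at h
        exact ⟨S, subset_rfl, hdom, h⟩
  exact H S.ncard S le_rfl hS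

end Final

/-- In a `P₇`-free chordal graph, `D_RN(G)` is an independence system. -/
theorem stmt_4 [Fintype V] (G : SimpleGraph V) (hch : Chordal G) (hP7 : PkFree G 7)
    (IR : Set V) (hIR : IsIrredundantSet G IR)
    (A : Set V) (hA : memDRN G IR A) (a : V) (ha : a ∈ A) :
    memDRN G IR (A \ {a}) := by
  classical
  obtain ⟨D, hD, hAeq⟩ := hA
  subst hAeq
  have haD : a ∈ D := ha.1
  have haIR : a ∉ IR := ha.2
  set B : Set V := (D ∩ IRᶜ) \ {a} with hBdef
  have hBD : B ⊆ D := fun x hx => hx.1.1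
  have hBIR : ∀ x ∈ B, x ∉ IR := fun x hx => hx.1.2
  -- choose witnesses via the key lemma
  have hwit : ∀ b, b ∈ B → ∃ t, t ∈ IR ∧ cnbr G t ∩ D = {b} ∧
      ∀ s ∈ IR, cnbr G s ∩ D = {a} → s ∉ cnbr G t := by
    intro b hb
    have hab : a ≠ b := fun h => hb.2 (by simp [h])
    obtain ⟨tb, h1, h2, h3⟩ := key_c2 hch hP7 hIR hD haD hb.1.1 haIR hb.1.2 hab
    exact ⟨tb, h1, h2, h3⟩
  choose t htIR htpriv htavoid using hwit
  -- the replacement set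
  set Sa : Set V := {s | s ∈ IR ∧ cnbr G s ∩ D = {a}} with hSadef
  set S₁ : Set V := (D ∩ IR) ∪ Sa with hS₁def
  have hS₁IR : S₁ ⊆ IR := by
    rintro x (hx | hx)
    · exact hx.2
    · exact hx.1
  -- `B ∪ S₁` dominates
  have hdom1 : Dominates G (B ∪ S₁) Set.univ := by
    intro v _
    by_cases hv : cnbr G v ∩ D = {a}
    · obtain ⟨x, hxIR, hxsub⟩ := hIR.1 v
      have hsub : cnbr G x ∩ D ⊆ {a} := by
        rw [← hv]; exact Set.inter_subset_inter_left _ hxsub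
      obtain ⟨e, heD, hex⟩ := dominated_vertex hD.1 x
      have hea : e = a := hsub ⟨hex, heD⟩
      have hxa : cnbr G x ∩ D = {a} :=
        hsub.antisymm (Set.singleton_subset_iff.2 ⟨hea ▸ hex, hea ▸ heD⟩)
      refine mem_cnbrSet.2 ⟨x, Or.inr (Or.inr ⟨hxIR, hxa⟩), ?_⟩
      exact cnbr_comm.2 (hxsub (self_mem_cnbr x))
    · obtain ⟨e, heD, hev⟩ := dominated_vertex hD.1 v
      have hex : ∃ e' ∈ cnbr G v ∩ D, e' ≠ a := by
        by_contra h2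
        push_neg at h2
        exact hv (Set.eq_singleton_iff_unique_mem.2
          ⟨(h2 e ⟨hev, heD⟩) ▸ ⟨hev, heD⟩, fun w hw => h2 w hw⟩)
      obtain ⟨e', ⟨he'v, he'D⟩, he'a⟩ := hex
      by_cases he'IR : e' ∈ IR
      · exact mem_cnbrSet.2 ⟨e', Or.inr (Or.inl ⟨he'D, he'IR⟩), cnbr_comm.2 he'v⟩
      · refine mem_cnbrSet.2 ⟨e', Or.inl ⟨⟨he'D, he'IR⟩, ?_⟩, cnbr_comm.2 he'v⟩
        simp [he'a]
  -- privacy of the witnesses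
  have hpriv : ∀ b (hb : b ∈ B), cnbr G (t b hb) ∩ (B ∪ S₁) = {b} := by
    intro b hb
    apply Set.Subset.antisymm
    · rintro w ⟨hwt, (hwB | hwDIR | hwSa)⟩
      · exact priv_eq (htpriv b hb) hwt (hBD hwB)
      · exfalso
        have : w = b := priv_eq (htpriv b hb) hwt hwDIR.1
        exact hBIR b hb (this ▸ hwDIR.2)
      · exact absurd hwt (htavoid b hb w hwSa.1 hwSa.2)
    · intro w hw
      rw [Set.mem_singleton_iff] at hw
      subst hw
      exact ⟨(priv_mem (htpriv w hb)).1, Or.inl hb⟩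
  -- extract a minimal sub-dominating set
  obtain ⟨S', hS'sub, hS'dom, hS'min⟩ := exists_minimal_dom B S₁ hdom1
  refine ⟨B ∪ S', ⟨hS'dom, ?_⟩, ?_⟩
  · -- minimality
    intro D'' hss hdom''
    obtain ⟨v, hvD', hvD''⟩ := Set.exists_of_ssubset hss
    by_cases hvB : v ∈ B
    · obtain ⟨e, heD'', het⟩ := dominated_vertex hdom'' (t v hvB)
      have hmem : e ∈ cnbr G (t v hvB) ∩ (B ∪ S₁) := by
        refine ⟨het, ?_⟩
        rcases hss.subset heD'' with h | h
        · exact Or.inl h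
        · exact Or.inr (hS'sub h)
      rw [hpriv v hvB, Set.mem_singleton_iff] at hmem
      exact hvD'' (hmem ▸ heD'')
    · have hvS' : v ∈ S' := hvD'.resolve_left hvB
      have hsub'' : D'' ⊆ B ∪ (S' \ {v}) := by
        intro w hw
        have hne : w ≠ v := fun h => hvD'' (h ▸ hw)
        rcases hss.subset hw with h | h
        · exact Or.inl h
        · exact Or.inr ⟨h, hne⟩
      exact hS'min (S' \ {v}) (Set.sdiff_singleton_ssubset.2 hvS')
        (dominates_mono hsub'' hdom'')
  · -- the trace on `RN` is `A \ {a}`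
    apply Set.Subset.antisymm
    · intro w hw
      exact ⟨Or.inl hw, hw.1.2⟩
    · rintro w ⟨(hwB | hwS'), hwIR⟩
      · exact hwB
      · exact absurd (hS₁IR (hS'sub hwS')) hwIR
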